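/- arXiv:1110.6126 — 4 statements merged into one kernel-verified Lean document; each statement's English description precedes it below -/
import Mathlib

section
/- Let D^inv ∘ D denote the composite random procedure that draws X from the uniform distribution U on [M]^N, then draws Z from D(X), and then draws W from D^inv(Z) (note every Z in the support of D(X) is non-surjective, so D^inv(Z) is well-defined). Then the resulting distribution of W is exactly the uniform distribution U on [M]^N. -/
namespace GLN

noncomputable section

open Finset

/-- `M = 2^m`. -/
def MM (m : ℕ) : ℕ := 2 ^ m

/-- `N = ⌈M · m · ln 2⌉`. -/
def NN (m : ℕ) : ℕ := ⌈(MM m : ℝ) * m * Real.log 2⌉₊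

/-- Strings `X ∈ [M]^N`. -/
abbrev Str (m : ℕ) := Fin (NN m) → Fin (MM m)

/-- The uniform probability mass function on `[M]^N`. -/
def umass (m : ℕ) (_X : Str m) : ℝ := 1 / (MM m : ℝ) ^ NN m

/-- The image `Im(X) ⊆ [M]` of a string, as a finset. -/
def img {m : ℕ} (X : Str m) : Finset (Fin (MM m)) := Finset.image X Finset.univ

/-- Transition kernel of `D_y(X)`: each coordinate with `x_i = y` is replaced by a uniform
independent sample from `[M] \ {y}`; other coordinates are unchanged. -/
def kerDy (m : ℕ) (y : Fin (MM m)) (X Z : Str m) : ℝ :=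
  ∏ i, if X i = y then (if Z i = y then 0 else 1 / ((MM m : ℝ) - 1))
       else (if Z i = X i then 1 else 0)

/-- Transition kernel of `D(X)`: choose `y` uniformly in `[M]`, then apply `D_y`. -/
def kerD (m : ℕ) (X Z : Str m) : ℝ := (1 / (MM m : ℝ)) * ∑ y, kerDy m y X Z

/-- The probability mass function of the distribution `D = D(U)`. -/
def dmass (m : ℕ) (Z : Str m) : ℝ := ∑ X, umass m X * kerD m X Z

/-- Transition kernel of `D_y^inv(Z)`: each coordinate is independently replaced by `y`
with probability `1/M` and left unchanged otherwise. -/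
def kerDinvy (m : ℕ) (y : Fin (MM m)) (Z W : Str m) : ℝ :=
  ∏ i, ((1 / (MM m : ℝ)) * (if W i = y then 1 else 0)
        + (1 - 1 / (MM m : ℝ)) * (if W i = Z i then 1 else 0))

/-- Transition kernel of `D^inv(Z)`: choose `y` uniformly in `[M] \ Im(Z)`,
then apply `D_y^inv`. -/
def kerDinv (m : ℕ) (Z W : Str m) : ℝ :=
  (1 / (((img Z)ᶜ.card : ℝ))) * ∑ y ∈ (img Z)ᶜ, kerDinvy m y Z W

/-- Probability of an event under a mass function. -/
def pr {m : ℕ} (μ : Str m → ℝ) (E : Set (Str m)) : ℝ := ∑ X, E.indicator μ X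

/-- Expectation of a real function under a mass function. -/
def ev {m : ℕ} (μ : Str m → ℝ) (g : Str m → ℝ) : ℝ := ∑ X, μ X * g X

/-- The surjectivity function `f_Surj`. -/
def fSurjB (m : ℕ) (X : Str m) : Bool := decide (img X = Finset.univ)

/-- The `q.2`-th bit of the binary encoding of coordinate `x_{q.1}` of `X`;
this realizes `X` as a string of `n = N·m` bits. -/
def bit {m : ℕ} (X : Str m) (q : Fin (NN m) × Fin m) : Bool :=
  Nat.testBit (X q.1).val q.2.val

-- auxiliary lemmas
lemma two_le_Mr {m : ℕ} (hm : 1 ≤ m) : (2:ℝ) ≤ (MM m : ℝ) := by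
  have : (2:ℕ) ≤ MM m := by
    calc 2 = 2^1 := rfl
    _ ≤ 2^m := Nat.pow_le_pow_right (by norm_num) hm
  exact_mod_cast this

lemma sum_prod_fun {N M : ℕ} (g : Fin N → Fin M → ℝ) :
    ∑ X : Fin N → Fin M, ∏ i, g i (X i) = ∏ i, ∑ x, g i x := by
  rw [Finset.prod_univ_sum, Fintype.piFinset_univ]

lemma sumx {m : ℕ} (hm : 1 ≤ m) (y z : Fin (MM m)) :
    ∑ x : Fin (MM m), (if x = y then (if z = y then 0 else 1 / ((MM m:ℝ) - 1))
      else (if z = x then 1 else 0)) = if z = y then 0 else (MM m:ℝ)/((MM m:ℝ)-1) := by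
  have hM := two_le_Mr hm
  by_cases hz : z = y
  · subst hz
    have hterm : ∀ x : Fin (MM m),
        (if x = z then (if z = z then (0:ℝ) else 1 / ((MM m:ℝ) - 1))
          else (if z = x then 1 else 0)) = 0 := by
      intro x
      by_cases hx : x = z
      · simp [hx]
      · have h2 : ¬ (z = x) := fun h => hx h.symm
        simp [hx, h2]
    rw [Finset.sum_congr rfl fun x _ => hterm x]
    simp
  · rw [if_neg hz]
    have hterm : ∀ x : Fin (MM m),
        (if x = y then 1 / ((MM m:ℝ) - 1) else (if z = x then 1 else 0))
        = (if x = y then 1/((MM m:ℝ)-1) else 0) + (if z = x then 1 else 0) := by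
      intro x
      by_cases hx : x = y
      · have h2 : ¬ (z = x) := fun h => hz (h.trans hx)
        simp [hx, h2, hz]
      · simp [hx]
    rw [Finset.sum_congr rfl fun x _ => hterm x, Finset.sum_add_distrib]
    rw [Finset.sum_ite_eq' univ y (fun _ => 1/((MM m:ℝ)-1)),
        Finset.sum_ite_eq univ z (fun _ => (1:ℝ))]
    simp only [Finset.mem_univ, if_pos]
    have h1 : (MM m:ℝ) - 1 ≠ 0 := by linarith
    rw [if_neg hz]
    field_simp
    ring

lemma sumz {m : ℕ} (hm : 1 ≤ m) (y w : Fin (MM m)) :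
    ∑ z : Fin (MM m), (if z = y then 0 else ((1/(MM m:ℝ)) * (if w = y then 1 else 0)
      + (1 - 1/(MM m:ℝ)) * (if w = z then 1 else 0))) = ((MM m:ℝ)-1)/(MM m:ℝ) := by
  have hM := two_le_Mr hm
  have hM0 : (MM m:ℝ) ≠ 0 := by linarith
  by_cases hw : w = y
  · subst hw
    have hterm : ∀ z : Fin (MM m),
        (if z = w then 0 else ((1/(MM m:ℝ)) * (if w = w then 1 else 0)
          + (1 - 1/(MM m:ℝ)) * (if w = z then 1 else 0)))
        = (1/(MM m:ℝ)) - (if z = w then (1/(MM m:ℝ)) else 0) := by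
      intro z
      by_cases hzw : z = w
      · simp [hzw]
      · have h2 : ¬ (w = z) := fun h => hzw h.symm
        simp [hzw, h2]
    rw [Finset.sum_congr rfl fun z _ => hterm z, Finset.sum_sub_distrib,
        Finset.sum_const, Finset.sum_ite_eq' univ w (fun _ => 1/(MM m:ℝ))]
    simp only [Finset.mem_univ, if_pos, Finset.card_univ, Fintype.card_fin, nsmul_eq_mul]
    field_simp
  · have hterm : ∀ z : Fin (MM m),
        (if z = y then 0 else ((1/(MM m:ℝ)) * (if w = y then 1 else 0)
          + (1 - 1/(MM m:ℝ)) * (if w = z then 1 else 0)))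
        = (1 - 1/(MM m:ℝ)) * (if w = z then 1 else 0) := by
      intro z
      by_cases hzy : z = y
      · subst hzy
        have h2 : ¬ (w = z) := hw
        simp [hw, h2]
      · simp [hzy, hw]
    rw [Finset.sum_congr rfl fun z _ => hterm z, ← Finset.mul_sum,
        Finset.sum_ite_eq univ w (fun _ => (1:ℝ))]
    simp only [Finset.mem_univ, if_pos, mul_one]
    field_simp

lemma sum_kerDy {m : ℕ} (hm : 1 ≤ m) (y : Fin (MM m)) (Z : Str m) :
    ∑ X : Str m, kerDy m y X Z =
      if y ∈ img Z then 0 else ((MM m:ℝ)/((MM m:ℝ)-1))^(NN m) := by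
  unfold kerDy
  rw [sum_prod_fun (fun i x => if x = y then (if Z i = y then 0 else 1 / ((MM m:ℝ) - 1))
    else (if Z i = x then 1 else 0))]
  rw [Finset.prod_congr rfl fun i _ => sumx hm y (Z i)]
  by_cases hy : y ∈ img Z
  · rw [if_pos hy]
    rw [img, Finset.mem_image] at hy
    obtain ⟨i, _, hi⟩ := hy
    exact Finset.prod_eq_zero (Finset.mem_univ i) (if_pos hi)
  · rw [if_neg hy]
    rw [img, Finset.mem_image] at hy
    push_neg at hy
    have h : ∀ i : Fin (NN m), (if Z i = y then (0:ℝ) else (MM m:ℝ)/((MM m:ℝ)-1))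
        = (MM m:ℝ)/((MM m:ℝ)-1) := fun i => if_neg (hy i (Finset.mem_univ i))
    rw [Finset.prod_congr rfl fun i _ => h i, Finset.prod_const, Finset.card_univ,
        Fintype.card_fin]

lemma dmass_eq {m : ℕ} (hm : 1 ≤ m) (Z : Str m) :
    dmass m Z = (((img Z)ᶜ.card : ℝ)) * (1/(MM m:ℝ)) * (1/((MM m:ℝ)-1))^(NN m) := by
  have hM := two_le_Mr hm
  have hM0 : (MM m:ℝ) ≠ 0 := by linarith
  have hM1 : (MM m:ℝ) - 1 ≠ 0 := by linarith
  unfold dmass umass kerD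
  simp only [← mul_assoc]
  rw [← Finset.mul_sum, Finset.sum_comm,
      Finset.sum_congr rfl fun y _ => sum_kerDy hm y Z]
  have h : ∀ y : Fin (MM m), (if y ∈ img Z then (0:ℝ) else ((MM m:ℝ)/((MM m:ℝ)-1))^(NN m))
      = if y ∈ (img Z)ᶜ then ((MM m:ℝ)/((MM m:ℝ)-1))^(NN m) else 0 := by
    intro y; by_cases hy : y ∈ img Z <;> simp [hy]
  rw [Finset.sum_congr rfl fun y _ => h y, Finset.sum_ite_mem, Finset.univ_inter,
      Finset.sum_const, nsmul_eq_mul, div_pow, div_pow, one_pow]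
  field_simp
/-- drawing `X ∼ U`, then `Z ∼ D(X)`, then `W ∼ D^inv(Z)` yields exactly the
uniform distribution: the composite mass at every `W` equals the uniform mass. -/
theorem stmt0 (m : ℕ) (hm : 1 ≤ m) (W : Str m) :
    ∑ Z : Str m, dmass m Z * kerDinv m Z W = umass m W := by
  have hM := two_le_Mr hm
  have hM0 : (MM m:ℝ) ≠ 0 := by linarith
  have hM1 : (MM m:ℝ) - 1 ≠ 0 := by linarith
  have key : ∀ Z : Str m, dmass m Z * kerDinv m Z W =
      (1/(MM m:ℝ)) * (1/((MM m:ℝ)-1))^(NN m) * ∑ y ∈ (img Z)ᶜ, kerDinvy m y Z W := by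
    intro Z
    rw [dmass_eq hm Z, kerDinv]
    by_cases hc : ((img Z)ᶜ).card = 0
    · rw [Finset.card_eq_zero] at hc
      simp [hc]
    · have hc' : (((img Z)ᶜ.card : ℝ)) ≠ 0 := Nat.cast_ne_zero.mpr hc
      field_simp
  rw [Finset.sum_congr rfl fun Z _ => key Z, ← Finset.mul_sum]
  have hswap : ∑ Z : Str m, ∑ y ∈ (img Z)ᶜ, kerDinvy m y Z W
      = ∑ y : Fin (MM m), ∑ Z : Str m, (if y ∈ (img Z)ᶜ then kerDinvy m y Z W else 0) := by
    calc ∑ Z : Str m, ∑ y ∈ (img Z)ᶜ, kerDinvy m y Z W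
        = ∑ Z : Str m, ∑ y : Fin (MM m), (if y ∈ (img Z)ᶜ then kerDinvy m y Z W else 0) := by
          refine Finset.sum_congr rfl fun Z _ => ?_
          rw [Finset.sum_ite_mem, Finset.univ_inter]
      _ = _ := Finset.sum_comm
  have hy : ∀ y : Fin (MM m), ∑ Z : Str m, (if y ∈ (img Z)ᶜ then kerDinvy m y Z W else 0)
      = (((MM m:ℝ)-1)/(MM m:ℝ))^(NN m) := by
    intro y
    have hterm : ∀ Z : Str m, (if y ∈ (img Z)ᶜ then kerDinvy m y Z W else 0)
        = ∏ i, (if Z i = y then 0 else ((1/(MM m:ℝ)) * (if W i = y then 1 else 0)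
            + (1 - 1/(MM m:ℝ)) * (if W i = Z i then 1 else 0))) := by
      intro Z
      by_cases hc : y ∈ (img Z)ᶜ
      · rw [if_pos hc, kerDinvy]
        have hne : ∀ i, Z i ≠ y := by
          rw [Finset.mem_compl, img, Finset.mem_image] at hc
          push_neg at hc
          exact fun i => hc i (Finset.mem_univ i)
        exact Finset.prod_congr rfl fun i _ => (if_neg (hne i)).symm
      · rw [if_neg hc]
        rw [Finset.mem_compl, not_not, img, Finset.mem_image] at hc
        obtain ⟨i, _, hi⟩ := hc
        refine (Finset.prod_eq_zero (Finset.mem_univ i) ?_).symm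
        rw [if_pos hi]
    rw [Finset.sum_congr rfl fun Z _ => hterm Z,
        sum_prod_fun (fun i z => if z = y then 0 else ((1/(MM m:ℝ)) * (if W i = y then 1 else 0)
          + (1 - 1/(MM m:ℝ)) * (if W i = z then 1 else 0))),
        Finset.prod_congr rfl fun i _ => sumz hm y (W i), Finset.prod_const,
        Finset.card_univ, Fintype.card_fin]
  rw [hswap, Finset.sum_congr rfl fun y _ => hy y, Finset.sum_const, Finset.card_univ,
      Fintype.card_fin, nsmul_eq_mul]
  rw [umass, div_pow, div_pow, one_pow]
  field_simp

end
end GLN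
end

section
/- Every string Z in the support of D satisfies f_Surj(Z) = 0 (i.e., Pr_{Z∼D}[f_Surj(Z)=1] = 0), and for every ε > 0 there exists m_0 such that for all m ≥ m_0, Pr_{X∼U}[f_Surj(X)=1] ≥ 1/e − ε. Consequently, for all m ≥ m_0, Pr_{X∼U}[f_Surj(X)=1] − Pr_{Z∼D}[f_Surj(Z)=1] ≥ 1/e − ε. -/
namespace GLN

noncomputable section

open Finset

open Filter Real Topology
open scoped Nat

lemma kerDy_eq_zero {m : ℕ} (y : Fin (MM m)) (X Z : Str m) (hZ : img Z = Finset.univ) :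
    kerDy m y X Z = 0 := by
  have hy : y ∈ img Z := hZ ▸ Finset.mem_univ y
  obtain ⟨i, -, hi⟩ := Finset.mem_image.mp hy
  refine Finset.prod_eq_zero (Finset.mem_univ i) ?_
  by_cases h : X i = y
  · simp [h, hi]
  · have : ¬ Z i = X i := by rw [hi]; exact fun hc => h hc.symm
    simp [h, this]

lemma dmass_eq_zero {m : ℕ} (Z : Str m) (hZ : img Z = Finset.univ) : dmass m Z = 0 := by
  unfold dmass kerD
  refine Finset.sum_eq_zero fun X _ => ?_
  rw [Finset.sum_eq_zero fun y _ => kerDy_eq_zero y X Z hZ]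
  ring

lemma pr_dmass_zero (m : ℕ) : pr (dmass m) {X : Str m | img X = Finset.univ} = 0 := by
  refine Finset.sum_eq_zero fun Z _ => ?_
  rw [Set.indicator_apply]
  split_ifs with h
  · exact dmass_eq_zero Z h
  · rfl
/-- partial alternating sums of binomial coefficients -/
lemma alt_partial (t r : ℕ) :
    ∑ k ∈ range (r+1), (-1:ℝ)^k * ((t+1).choose k : ℝ) = (-1)^r * (t.choose r : ℝ) := by
  induction r with
  | zero => simp
  | succ r ih =>
      rw [Finset.sum_range_succ, ih, Nat.choose_succ_succ]
      push_cast
      ring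

lemma bonf_pointwise (t r : ℕ) (hr : Odd r) :
    ∑ k ∈ range (r+1), (-1:ℝ)^k * (t.choose k : ℝ) ≤ (if t = 0 then (1:ℝ) else 0) := by
  cases t with
  | zero =>
      rw [Finset.sum_range_succ']
      simp
  | succ t =>
      rw [alt_partial, hr.neg_one_pow]
      simp [Nat.cast_nonneg]

/-- counting identity -/
lemma count_eq (m k : ℕ) :
    ∑ X : Str m, ((((img X)ᶜ).card.choose k : ℝ)) =
      ((MM m).choose k : ℝ) * ((MM m - k : ℕ) ^ NN m : ℕ) := by
  have key : ∀ X : Str m, (((img X)ᶜ).card.choose k : ℝ) =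
      ∑ S ∈ Finset.univ.powersetCard k, (if S ⊆ (img X)ᶜ then (1:ℝ) else 0) := by
    intro X
    rw [Finset.sum_boole]
    have : Finset.filter (fun S => S ⊆ (img X)ᶜ) (Finset.univ.powersetCard k)
        = ((img X)ᶜ).powersetCard k := by
      ext S
      simp [Finset.mem_powersetCard, and_comm]
    rw [this]
    simp [Finset.card_powersetCard]
  simp_rw [key]
  rw [Finset.sum_comm]
  have inner : ∀ S : Finset (Fin (MM m)), S.card = k →
      ∑ X : Str m, (if S ⊆ (img X)ᶜ then (1:ℝ) else 0) = ((MM m - k)^ NN m : ℕ) := by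
    intro S hS
    rw [Finset.sum_boole]
    have hfil : Finset.filter (fun X : Str m => S ⊆ (img X)ᶜ) Finset.univ
        = Fintype.piFinset (fun _ : Fin (NN m) => Sᶜ) := by
      ext X
      simp only [Finset.mem_filter, Finset.mem_univ, true_and, Fintype.mem_piFinset,
        Finset.mem_compl]
      constructor
      · intro h i hXi
        have : X i ∈ img X := Finset.mem_image.mpr ⟨i, Finset.mem_univ i, rfl⟩
        exact (Finset.mem_compl.mp (h hXi)) this
      · intro h a haS
        rw [Finset.mem_compl]
        intro hmem
        obtain ⟨i, -, hi⟩ := Finset.mem_image.mp hmem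
        exact h i (hi ▸ haS)
    rw [hfil, Fintype.card_piFinset]
    simp [Finset.card_compl, hS]
  rw [Finset.sum_congr rfl (fun S hS => inner S (Finset.mem_powersetCard.mp hS).2)]
  rw [Finset.sum_const, Finset.card_powersetCard]
  simp [mul_comm]
lemma umass_lower (m r : ℕ) (hr : Odd r) :
    ∑ k ∈ range (r+1), (-1:ℝ)^k * ((MM m).choose k : ℝ) *
        (((MM m - k) ^ NN m : ℕ) : ℝ) / (MM m : ℝ) ^ NN m
      ≤ pr (umass m) {X : Str m | img X = Finset.univ} := by
  have hM0 : 0 < MM m := pow_pos (by norm_num) m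
  have hM : (0:ℝ) < (MM m : ℝ) ^ NN m :=
    pow_pos (by exact_mod_cast hM0) _
  have hpr : pr (umass m) {X : Str m | img X = Finset.univ}
      = (∑ X : Str m, if ((img X)ᶜ).card = 0 then (1:ℝ) else 0) / (MM m : ℝ) ^ NN m := by
    unfold pr umass
    rw [Finset.sum_div]
    refine Finset.sum_congr rfl fun X _ => ?_
    have hiff : (img X = Finset.univ) ↔ ((img X)ᶜ).card = 0 := by
      rw [Finset.card_eq_zero]
      constructor
      · intro h; rw [h, Finset.compl_univ]
      · intro h
        have := compl_compl (img X)
        rw [h] at this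
        rw [← this, Finset.compl_empty]
    simp only [Set.indicator_apply, Set.mem_setOf_eq]
    split_ifs with h1 h2 h2
    · rw [one_div]
    · exact absurd (hiff.mp h1) h2
    · exact absurd (hiff.mpr h2) h1
    · simp
  have hnum : ∑ k ∈ range (r+1), (-1:ℝ)^k * ((MM m).choose k : ℝ) *
        (((MM m - k) ^ NN m : ℕ) : ℝ)
      ≤ ∑ X : Str m, (if ((img X)ᶜ).card = 0 then (1:ℝ) else 0) := by
    calc ∑ k ∈ range (r+1), (-1:ℝ)^k * ((MM m).choose k : ℝ) * (((MM m - k) ^ NN m : ℕ) : ℝ)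
        = ∑ k ∈ range (r+1), (-1:ℝ)^k * ∑ X : Str m, ((((img X)ᶜ).card.choose k : ℝ)) := by
          refine Finset.sum_congr rfl fun k _ => ?_
          rw [mul_assoc, ← count_eq m k]
      _ = ∑ X : Str m, ∑ k ∈ range (r+1), (-1:ℝ)^k * (((img X)ᶜ).card.choose k : ℝ) := by
          simp_rw [Finset.mul_sum]
          exact Finset.sum_comm
      _ ≤ ∑ X : Str m, (if ((img X)ᶜ).card = 0 then (1:ℝ) else 0) :=
          Finset.sum_le_sum fun X _ => bonf_pointwise _ r hr
  rw [hpr, ← Finset.sum_div]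
  exact div_le_div_of_nonneg_right hnum hM.le
lemma LtendM : Tendsto (fun m : ℕ => ((2:ℝ)) ^ m) atTop atTop :=
  tendsto_pow_atTop_atTop_of_one_lt (by norm_num)
lemma Ldiv (c : ℝ) : Tendsto (fun m : ℕ => c / (2:ℝ) ^ m) atTop (𝓝 0) :=
  tendsto_const_nhds.div_atTop LtendM
lemma Lm_div : Tendsto (fun m : ℕ => (m : ℝ) / (2:ℝ) ^ m) atTop (𝓝 0) := by
  simpa using tendsto_pow_const_div_const_pow_of_one_lt 1 (show (1:ℝ) < 2 by norm_num)
lemma Lratio (k : ℕ) : Tendsto (fun m : ℕ => ((2:ℝ)^m - k) / (2:ℝ)^m) atTop (𝓝 1) := by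
  have : ∀ m : ℕ, ((2:ℝ)^m - k) / (2:ℝ)^m = 1 - k / (2:ℝ)^m := by
    intro m
    have h : ((2:ℝ)^m) ≠ 0 := by positivity
    field_simp
  simp_rw [this]
  simpa using tendsto_const_nhds.sub (Ldiv (k:ℝ))
lemma Ldelta (k : ℕ) :
    Tendsto (fun m : ℕ => (k:ℝ) * ((k:ℝ) * ((m:ℝ) * Real.log 2) + 1) / ((2:ℝ)^m - k))
      atTop (𝓝 0) := by
  have hA : Tendsto (fun m : ℕ => (k:ℝ) * ((k:ℝ) * ((m:ℝ) * Real.log 2) + 1) / (2:ℝ)^m)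
      atTop (𝓝 0) := by
    have h1 := (Lm_div.const_mul ((k:ℝ) * (k:ℝ) * Real.log 2)).add (Ldiv (k:ℝ))
    rw [add_zero, mul_zero] at h1
    refine h1.congr fun m => ?_
    have h : ((2:ℝ)^m) ≠ 0 := by positivity
    field_simp
  have hB : Tendsto (fun m : ℕ => (2:ℝ)^m / ((2:ℝ)^m - k)) atTop (𝓝 1) := by
    have := (Lratio k).inv₀ (by norm_num)
    rw [inv_one] at this
    refine this.congr' ?_
    filter_upwards [LtendM.eventually_gt_atTop (k:ℝ)] with m hm
    rw [inv_div]
  have := hA.mul hB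
  rw [zero_mul] at this
  refine this.congr' ?_
  filter_upwards [LtendM.eventually_gt_atTop (k:ℝ)] with m hm
  have h1 : ((2:ℝ)^m) ≠ 0 := by positivity
  have h2 : ((2:ℝ)^m - k) ≠ 0 := by linarith
  field_simp

lemma MM_cast (m : ℕ) : ((MM m : ℕ) : ℝ) = (2:ℝ)^m := by
  unfold MM; push_cast; ring
lemma MM_pos (m : ℕ) : (0:ℝ) < (MM m : ℝ) := by rw [MM_cast]; positivity
lemma NN_low (m : ℕ) : (MM m : ℝ) * m * Real.log 2 ≤ (NN m : ℝ) := Nat.le_ceil _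
lemma NN_high (m : ℕ) : (NN m : ℝ) ≤ (MM m : ℝ) * m * Real.log 2 + 1 := by
  have hl : (0:ℝ) ≤ Real.log 2 := Real.log_nonneg (by norm_num)
  have h0 : (0:ℝ) ≤ (MM m : ℝ) * m * Real.log 2 := by positivity
  exact (Nat.ceil_lt_add_one h0).le
lemma log_MM (m : ℕ) : Real.log (MM m : ℝ) = m * Real.log 2 := by
  rw [MM_cast, Real.log_pow]

lemma tendsto_term (k : ℕ) :
    Tendsto (fun m => ((MM m).choose k : ℝ) * (((MM m : ℝ) - k) / (MM m : ℝ)) ^ (NN m))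
      atTop (𝓝 (1 / (k ! : ℝ))) := by
  -- Part A : choose / M^k → 1/k!
  have hA : Tendsto (fun m => ((MM m).choose k : ℝ) / (MM m : ℝ)^k) atTop (𝓝 (1 / k !)) := by
    have hprod : Tendsto (fun m => ∏ i ∈ range k, (((MM m : ℝ) - i) / (MM m : ℝ)))
        atTop (𝓝 1) := by
      have h : Tendsto (fun m => ∏ i ∈ range k, (((MM m : ℝ) - i) / (MM m : ℝ)))
          atTop (𝓝 (∏ _i ∈ range k, (1:ℝ))) := by
        refine tendsto_finset_prod _ fun i _ => ?_
        exact (Lratio i).congr fun m => by rw [MM_cast]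
      simpa using h
    have h2 := hprod.const_mul (1 / (k ! : ℝ))
    rw [mul_one] at h2
    refine h2.congr' ?_
    filter_upwards [eventually_ge_atTop k] with m hm
    have hkM : k ≤ MM m := le_trans hm (le_of_lt (Nat.lt_two_pow_self (n := m)))
    have hd : ((MM m).choose k : ℝ) = ((MM m).descFactorial k : ℝ) / k ! := by
      rw [Nat.descFactorial_eq_factorial_mul_choose]
      push_cast
      field_simp
    have hdf : ((MM m).descFactorial k : ℝ) = ∏ i ∈ range k, ((MM m : ℝ) - i) := by
      rw [Nat.descFactorial_eq_prod_range]
      push_cast [Nat.cast_prod]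
      refine Finset.prod_congr rfl fun i hi => ?_
      have hi' : i ≤ MM m := le_trans (le_of_lt (Finset.mem_range.mp hi)) hkM
      rw [Nat.cast_sub hi']
    rw [hd, hdf, Finset.prod_div_distrib, Finset.prod_const, Finset.card_range]
    ring
  -- Part B : M^k * ((M-k)/M)^N → 1
  have hup : ∀ m : ℕ, k < MM m →
      (MM m:ℝ)^k * (((MM m:ℝ) - k)/(MM m:ℝ))^(NN m) ≤ 1 := by
    intro m hkM
    have hMpos := MM_pos m
    have hkM' : (k:ℝ) < (MM m:ℝ) := by exact_mod_cast hkM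
    set M := (MM m : ℝ)
    have hP0 : (0:ℝ) ≤ (M - k)/M := by
      apply div_nonneg (by linarith) hMpos.le
    have hstep1 : (M - k)/M ≤ Real.exp (-((k:ℝ)/M)) := by
      have h := Real.add_one_le_exp (-((k:ℝ)/M))
      have heq : (M-k)/M = 1 - (k:ℝ)/M := by field_simp
      rw [heq]; linarith
    have hstep2 : ((M-k)/M)^(NN m) ≤ Real.exp (-((k:ℝ)/M))^(NN m) :=
      pow_le_pow_left₀ hP0 hstep1 _
    have hexp : Real.exp (-((k:ℝ)/M))^(NN m) = Real.exp (-((NN m:ℝ) * ((k:ℝ)/M))) := by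
      rw [← Real.exp_nat_mul]; ring_nf
    have hN : (k:ℝ) * Real.log M ≤ (NN m:ℝ) * ((k:ℝ)/M) := by
      have hlog : Real.log M = m * Real.log 2 := log_MM m
      have hNl := NN_low m
      have hk0 : (0:ℝ) ≤ (k:ℝ)/M := by positivity
      calc (k:ℝ) * Real.log M = (M * m * Real.log 2) * ((k:ℝ)/M) := by
            rw [hlog]; field_simp
        _ ≤ (NN m:ℝ) * ((k:ℝ)/M) := mul_le_mul_of_nonneg_right hNl hk0
    calc M^k * ((M-k)/M)^(NN m)
        ≤ M^k * Real.exp (-((NN m:ℝ) * ((k:ℝ)/M))) := by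
          rw [← hexp]; exact mul_le_mul_of_nonneg_left hstep2 (by positivity)
      _ ≤ M^k * Real.exp (-((k:ℝ) * Real.log M)) := by
          refine mul_le_mul_of_nonneg_left ?_ (by positivity)
          exact Real.exp_le_exp.mpr (by linarith)
      _ = 1 := by
          rw [Real.exp_neg, Real.exp_nat_mul, Real.exp_log hMpos]
          field_simp
  have hlow : ∀ m : ℕ, k < MM m →
      Real.exp (-((k:ℝ) * ((k:ℝ) * ((m:ℝ) * Real.log 2) + 1) / ((2:ℝ)^m - k)))
        ≤ (MM m:ℝ)^k * (((MM m:ℝ) - k)/(MM m:ℝ))^(NN m) := by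
    intro m hkM
    have hMpos := MM_pos m
    have hkM' : (k:ℝ) < (MM m:ℝ) := by exact_mod_cast hkM
    have hMcast := MM_cast m
    set M := (MM m : ℝ) with hMdef
    have hMk : (0:ℝ) < M - k := by linarith
    set u : ℝ := (k:ℝ) / (M - k) with hu
    have hu0 : 0 ≤ u := by positivity
    have hstep1 : Real.exp (-u) ≤ (M - k)/M := by
      have h := Real.add_one_le_exp u
      have h2 : M / (M - k) ≤ Real.exp u := by
        have : M / (M - k) = u + 1 := by
          rw [hu]; field_simp; ring
        linarith
      have h3 : (0:ℝ) < M / (M - k) := by positivity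
      have h4 := inv_anti₀ h3 h2
      rw [Real.exp_neg]
      rw [inv_div] at h4
      exact h4
    have hstep2 : Real.exp (-u)^(NN m) ≤ ((M-k)/M)^(NN m) :=
      pow_le_pow_left₀ (Real.exp_nonneg _) hstep1 _
    have hexp : Real.exp (-u)^(NN m) = Real.exp (-((NN m:ℝ) * u)) := by
      rw [← Real.exp_nat_mul]; ring_nf
    have hNu : (NN m:ℝ) * u ≤ (k:ℝ) * Real.log M
        + (k:ℝ) * ((k:ℝ) * ((m:ℝ) * Real.log 2) + 1) / (M - k) := by
      have hNh := NN_high m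
      have hlog : Real.log M = m * Real.log 2 := log_MM m
      have h1 : (NN m:ℝ) * u ≤ (M * m * Real.log 2 + 1) * u :=
        mul_le_mul_of_nonneg_right hNh hu0
      have h2 : (M * m * Real.log 2 + 1) * u
          = (k:ℝ) * Real.log M + (k:ℝ) * ((k:ℝ) * ((m:ℝ) * Real.log 2) + 1) / (M - k) := by
        rw [hlog, hu]
        field_simp
        ring
      linarith
    calc Real.exp (-((k:ℝ) * ((k:ℝ) * ((m:ℝ) * Real.log 2) + 1) / ((2:ℝ)^m - k)))
        ≤ M^k * Real.exp (-((NN m:ℝ) * u)) := by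
          have hMk1 : M^k = Real.exp ((k:ℝ) * Real.log M) := by
            rw [Real.exp_nat_mul, Real.exp_log hMpos]
          rw [hMk1, ← Real.exp_add, ← hMcast]
          apply Real.exp_le_exp.mpr
          linarith
      _ ≤ M^k * ((M-k)/M)^(NN m) := by
          rw [← hexp]
          exact mul_le_mul_of_nonneg_left hstep2 (by positivity)
  -- squeeze for part B
  have hlowT : Tendsto (fun m : ℕ =>
      Real.exp (-((k:ℝ) * ((k:ℝ) * ((m:ℝ) * Real.log 2) + 1) / ((2:ℝ)^m - k))))
      atTop (𝓝 1) := by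
    have h := (Real.continuous_exp.tendsto (-0 : ℝ)).comp ((Ldelta k).neg)
    rw [neg_zero, Real.exp_zero] at h
    exact h
  have hev : ∀ᶠ m : ℕ in atTop, k < MM m := by
    filter_upwards [eventually_ge_atTop k] with m hm
    exact lt_of_le_of_lt hm (Nat.lt_two_pow_self (n := m))
  have hB : Tendsto (fun m => (MM m:ℝ)^k * (((MM m:ℝ) - k)/(MM m:ℝ))^(NN m))
      atTop (𝓝 1) := by
    refine tendsto_of_tendsto_of_tendsto_of_le_of_le' hlowT tendsto_const_nhds ?_ ?_
    · filter_upwards [hev] with m hm using hlow m hm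
    · filter_upwards [hev] with m hm using hup m hm
  have := hA.mul hB
  rw [mul_one] at this
  refine this.congr fun m => ?_
  have hM0 : (MM m:ℝ) ≠ 0 := (MM_pos m).ne'
  field_simp
def Q (r : ℕ) : ℝ := ∑ k ∈ range (r+1), (-1:ℝ)^k / k !

lemma tendsto_A (r : ℕ) :
    Tendsto (fun m => ∑ k ∈ range (r+1), (-1:ℝ)^k * ((MM m).choose k : ℝ) *
        (((MM m - k) ^ NN m : ℕ) : ℝ) / (MM m : ℝ) ^ NN m) atTop (𝓝 (Q r)) := by
  unfold Q
  refine tendsto_finset_sum _ fun k _ => ?_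
  have h := (tendsto_term k).const_mul ((-1:ℝ)^k)
  rw [mul_one_div] at h
  refine h.congr' ?_
  filter_upwards [eventually_ge_atTop k] with m hm
  have hkM : k ≤ MM m := le_trans hm (le_of_lt (Nat.lt_two_pow_self (n := m)))
  have hM0 : (MM m:ℝ) ≠ 0 := (MM_pos m).ne'
  have hcast : (((MM m - k) ^ NN m : ℕ) : ℝ) = ((MM m:ℝ) - (k:ℝ))^(NN m) := by
    push_cast [Nat.cast_sub hkM]
    ring
  rw [hcast, div_pow]
  ring

lemma tendsto_Q : Tendsto Q atTop (𝓝 (Real.exp (-1))) := by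
  have h : HasSum (fun n : ℕ => (-1:ℝ)^n / n !) (Real.exp (-1)) := by
    have h2 := NormedSpace.expSeries_div_hasSum_exp (𝔸 := ℝ) (-1 : ℝ)
    rw [← Real.exp_eq_exp_ℝ] at h2
    exact h2
  exact h.tendsto_sum_nat.comp (tendsto_add_atTop_nat 1)

/-- `D` gives probability `0` to surjective strings, and for every `ε > 0`,
for all sufficiently large `m`, `Pr_U[f_Surj = 1] ≥ 1/e − ε`; consequently
`Pr_U[f_Surj = 1] − Pr_D[f_Surj = 1] ≥ 1/e − ε`. -/
theorem stmt3 :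
    (∀ m : ℕ, 1 ≤ m → pr (dmass m) {X : Str m | img X = Finset.univ} = 0) ∧
    (∀ ε : ℝ, 0 < ε → ∃ m0 : ℕ, ∀ m : ℕ, m0 ≤ m →
      1 / Real.exp 1 - ε ≤ pr (umass m) {X : Str m | img X = Finset.univ} ∧
      1 / Real.exp 1 - ε ≤
        pr (umass m) {X : Str m | img X = Finset.univ} -
          pr (dmass m) {X : Str m | img X = Finset.univ}) := by
  constructor
  · intro m _
    exact pr_dmass_zero m
  · intro ε hε
    obtain ⟨r0, hr0⟩ := Metric.tendsto_atTop.mp tendsto_Q (ε/2) (by linarith)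
    set r : ℕ := 2 * r0 + 1 with hrdef
    have hrodd : Odd r := ⟨r0, by ring⟩
    have hrge : r0 ≤ r := by omega
    have hQr := hr0 r hrge
    obtain ⟨m1, hm1⟩ := Metric.tendsto_atTop.mp (tendsto_A r) (ε/2) (by linarith)
    refine ⟨max m1 1, fun m hm => ?_⟩
    have hAm := hm1 m (le_trans (le_max_left _ _) hm)
    have hlow := umass_lower m r hrodd
    have h1 : Real.exp (-1) - ε/2 < Q r := by
      have := abs_lt.mp (by rw [Real.dist_eq] at hQr; exact hQr)
      linarith [this.1]
    have h2 : Q r - ε/2 < ∑ k ∈ range (r+1), (-1:ℝ)^k * ((MM m).choose k : ℝ) *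
        (((MM m - k) ^ NN m : ℕ) : ℝ) / (MM m : ℝ) ^ NN m := by
      have := abs_lt.mp (by rw [Real.dist_eq] at hAm; exact hAm)
      linarith [this.1]
    have hexp : 1 / Real.exp 1 = Real.exp (-1) := by
      rw [Real.exp_neg, one_div]
    have hmain : 1 / Real.exp 1 - ε ≤ pr (umass m) {X : Str m | img X = Finset.univ} := by
      rw [hexp]
      linarith
    exact ⟨hmain, by rw [pr_dmass_zero m]; linarith⟩

end
end GLN
end

section
/- For every k ≤ M/2, the distribution D, viewed via the bit encoding as a distribution on {0,1}^n with n = Nm, is 2k/M-almost k-wise independent: every Boolean k-term C satisfies 1 − 2k/M ≤ Pr_D[C]/2^{−k} ≤ 1 + 2k/M. -/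
namespace GLN

noncomputable section

open Finset

lemma prod_one_sub_ge {ι : Type*} (s : Finset ι) (t : ι → ℝ) (h0 : ∀ i ∈ s, 0 ≤ t i)
    (h1 : ∀ i ∈ s, t i ≤ 1) : 1 - ∑ i ∈ s, t i ≤ ∏ i ∈ s, (1 - t i) := by
  classical
  induction s using Finset.induction with
  | empty => simp
  | @insert a s ha ih =>
    rw [Finset.prod_insert ha, Finset.sum_insert ha]
    have h0' : ∀ i ∈ s, 0 ≤ t i := fun i hi => h0 i (mem_insert_of_mem hi)
    have h1' : ∀ i ∈ s, t i ≤ 1 := fun i hi => h1 i (mem_insert_of_mem hi)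
    have ihs := ih h0' h1'
    have hta0 := h0 a (mem_insert_self a s)
    have hta1 := h1 a (mem_insert_self a s)
    have hs0 : 0 ≤ ∑ i ∈ s, t i := Finset.sum_nonneg h0'
    nlinarith [mul_le_mul_of_nonneg_left ihs (by linarith : (0:ℝ) ≤ 1 - t a)]

lemma ratio_pow_le (M : ℕ) (hM : 2 ≤ M) :
    ∀ k : ℕ, 2 * k ≤ M → ((M : ℝ) / ((M : ℝ) - 1)) ^ k ≤ 1 + 2 * k / M := by
  have hM1 : (1 : ℝ) < (M : ℝ) := by exact_mod_cast Nat.lt_of_lt_of_le one_lt_two hM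
  have hM0 : (0 : ℝ) < (M : ℝ) := by linarith
  have hMm1 : (0 : ℝ) < (M : ℝ) - 1 := by linarith
  intro k
  induction k with
  | zero => simp
  | succ k ih =>
    intro hk
    have hk' : 2 * k ≤ M := by omega
    have h2 : 2 * (k : ℝ) + 2 ≤ (M : ℝ) := by
      have : ((2 * (k + 1) : ℕ) : ℝ) ≤ (M : ℝ) := by exact_mod_cast hk
      push_cast at this; linarith
    have ihk := ih hk'
    have hbase : (0:ℝ) ≤ (M : ℝ) / ((M : ℝ) - 1) := by positivity
    calc ((M : ℝ) / ((M : ℝ) - 1)) ^ (k+1)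
        = ((M : ℝ) / ((M : ℝ) - 1)) ^ k * ((M : ℝ) / ((M : ℝ) - 1)) := by ring
      _ ≤ (1 + 2 * k / M) * ((M : ℝ) / ((M : ℝ) - 1)) := by
          apply mul_le_mul_of_nonneg_right ihk hbase
      _ ≤ 1 + 2 * (k + 1 : ℕ) / M := by
          have key : (1 + 2 * (k:ℝ) / M) * ((M : ℝ) / ((M : ℝ) - 1))
              = ((M + 2*k) * M) / (M * (M - 1)) := by field_simp
          rw [key, div_le_iff₀ (by positivity)]
          have expand : (1 + 2 * ((k:ℝ)+1) / M) * ((M:ℝ) * (M - 1))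
              = ((M:ℝ) + 2*k + 2) * (M - 1) := by field_simp; ring
          push_cast
          rw [expand]
          nlinarith

lemma card_cyl (m : ℕ) (T : Finset (Fin m)) (b : Fin m → Bool) :
    (univ.filter fun v : Fin (2^m) => ∀ j ∈ T, Nat.testBit v.val j.val = b j).card
      = 2 ^ (m - T.card) := by
  classical
  set e : (Fin m → Fin 2) ≃ Fin (2 ^ m) := finFunctionFinEquiv with he
  have hbit : ∀ (v : Fin (2^m)) (j : Fin m),
      Nat.testBit v.val j.val = decide ((e.symm v j).val = 1) := by
    intro v j
    have h1 : (e.symm v j).val = v.val / 2 ^ (j:ℕ) % 2 := rfl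
    rw [Nat.testBit_eq_decide_div_mod_eq, h1]
  have hiff : ∀ (v : Fin (2^m)) (j : Fin m),
      (Nat.testBit v.val j.val = b j) ↔ (e.symm v j = (if b j then 1 else 0)) := by
    intro v j
    rw [hbit]
    have hlt := (e.symm v j).isLt
    cases hb : b j <;> simp only [decide_eq_false_iff_not, decide_eq_true_iff, Bool.false_eq_true, if_true, if_false, Fin.ext_iff, Fin.val_zero, Fin.val_one] <;> omega
  have himg : (univ.filter fun v : Fin (2^m) => ∀ j ∈ T, Nat.testBit v.val j.val = b j)
      = (univ.filter fun f : Fin m → Fin 2 =>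
          ∀ j ∈ T, f j = (if b j then 1 else 0)).image e := by
    ext v
    simp only [mem_filter, mem_image, mem_univ, true_and]
    constructor
    · intro hv
      exact ⟨e.symm v, fun j hj => (hiff v j).mp (hv j hj), e.apply_symm_apply v⟩
    · rintro ⟨f, hf, rfl⟩ j hj
      refine (hiff (e f) j).mpr ?_
      rw [e.symm_apply_apply]
      exact hf j hj
  have hpi : (univ.filter fun f : Fin m → Fin 2 =>
        ∀ j ∈ T, f j = (if b j then 1 else 0))
      = Fintype.piFinset (fun j => if j ∈ T then {(if b j then 1 else 0)} else univ) := by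
    ext f
    simp only [mem_filter, mem_univ, true_and, Fintype.mem_piFinset]
    constructor
    · intro h j
      by_cases hj : j ∈ T <;> simp [hj, h j]
    · intro h j hj
      have := h j
      simpa [hj] using this
  rw [himg, Finset.card_image_of_injective _ e.injective, hpi, Fintype.card_piFinset]
  have : ∀ j : Fin m, ((if j ∈ T then ({(if b j then 1 else 0)} : Finset (Fin 2)) else univ).card)
      = if j ∈ T then 1 else 2 := by
    intro j; split <;> simp
  simp only [this]
  rw [Finset.prod_ite, Finset.prod_const, Finset.prod_const, one_pow, one_mul]
  congr 1
  have : (filter (fun x => x ∉ T) univ) = Tᶜ := by ext x; simp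
  rw [this, Finset.card_compl, Fintype.card_fin]

lemma prod_ite_all {ι : Type*} [Fintype ι] (p : ι → Prop) [DecidablePred p] (f : ι → ℝ) :
    (∏ i, if p i then f i else 0) = if (∀ i, p i) then ∏ i, f i else 0 := by
  by_cases h : ∀ i, p i
  · rw [if_pos h]
    exact Finset.prod_congr rfl fun i _ => if_pos (h i)
  · push_neg at h
    obtain ⟨i, hi⟩ := h
    rw [if_neg (by push_neg; exact ⟨i, hi⟩)]
    exact Finset.prod_eq_zero (mem_univ i) (by simp [hi])

/-- for `k ≤ M/2`, the distribution `D`, viewed through the bit encoding, is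
`2k/M`-almost `k`-wise independent: every Boolean `k`-term `C` (a conjunction fixing `k`
distinct bits of the encoding) satisfies `1 − 2k/M ≤ Pr_D[C]/2^{−k} ≤ 1 + 2k/M`. -/
theorem stmt6 (m k : ℕ) (hm : 1 ≤ m) (hk : 2 * k ≤ MM m)
    (V : Finset (Fin (NN m) × Fin m)) (hV : V.card = k)
    (a : Fin (NN m) × Fin m → Bool) :
    1 - 2 * (k : ℝ) / (MM m : ℝ) ≤
      pr (dmass m) {X : Str m | ∀ q ∈ V, bit X q = a q} / (2 : ℝ)⁻¹ ^ k ∧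
    pr (dmass m) {X : Str m | ∀ q ∈ V, bit X q = a q} / (2 : ℝ)⁻¹ ^ k ≤
      1 + 2 * (k : ℝ) / (MM m : ℝ) := by
  classical
  have hMnat : 2 ≤ MM m := by
    have : 2^1 ≤ 2^m := Nat.pow_le_pow_right (by norm_num) hm
    simpa [MM] using this
  set Mr : ℝ := (MM m : ℝ) with hMr
  have hM2 : (2:ℝ) ≤ Mr := by rw [hMr]; exact_mod_cast hMnat
  have hM0 : (0:ℝ) < Mr := by linarith
  have hMm1 : (0:ℝ) < Mr - 1 := by linarith
  -- Step 1 : dmass formula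
  have hdmass : ∀ Z : Str m, dmass m Z
      = (1/Mr) * ∑ y, ∏ i, (if Z i = y then (0:ℝ) else 1/(Mr-1)) := by
    intro Z
    have humass : ∀ X : Str m, umass m X = ∏ _i : Fin (NN m), (1/Mr) := by
      intro X
      rw [Finset.prod_const, Finset.card_univ, Fintype.card_fin, one_div, inv_pow, ← one_div]
      rfl
    have hq : ∀ (y z : Fin (MM m)),
        (∑ x : Fin (MM m), (1/Mr) * (if x = y then (if z = y then (0:ℝ) else 1/(Mr-1))
          else (if z = x then 1 else 0))) = (if z = y then (0:ℝ) else 1/(Mr-1)) := by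
      intro y z
      rw [← Finset.mul_sum]
      by_cases hz : z = y
      · rw [if_pos hz, Finset.sum_eq_zero, mul_zero]
        intro x _
        by_cases hx : x = y
        · simp [hx, hz]
        · simp only [if_neg hx, hz]
          rw [if_neg]
          intro h; exact hx h.symm
      · rw [if_neg hz]
        have hterm : ∀ x : Fin (MM m),
            (if x = y then 1/(Mr-1) else (if z = x then (1:ℝ) else 0))
            = (if x = y then 1/(Mr-1) else 0) + (if x = z then 1 else 0) := by
          intro x
          by_cases hx : x = y
          · rw [if_pos hx, if_pos hx, if_neg, add_zero]
            intro h; exact hz (hx ▸ h).symm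
          · rw [if_neg hx, if_neg hx, zero_add]
            by_cases hxz : x = z
            · rw [if_pos hxz.symm, if_pos hxz]
            · rw [if_neg (fun h => hxz h.symm), if_neg hxz]
        rw [Finset.sum_congr rfl fun x _ => hterm x, Finset.sum_add_distrib,
          Finset.sum_ite_eq' univ y (fun _ => (1:ℝ)/(Mr-1)),
          Finset.sum_ite_eq' univ z (fun _ => (1:ℝ))]
        simp only [mem_univ, if_pos]
        field_simp
        ring
    calc dmass m Z = ∑ X : Str m, umass m X * ((1/Mr) * ∑ y, kerDy m y X Z) := rfl
      _ = (1/Mr) * ∑ y, ∑ X : Str m, umass m X * kerDy m y X Z := by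
          simp only [Finset.mul_sum]
          rw [Finset.sum_comm]
          apply Finset.sum_congr rfl
          intro y _
          apply Finset.sum_congr rfl
          intro X _
          ring
      _ = (1/Mr) * ∑ y, ∏ i, (if Z i = y then (0:ℝ) else 1/(Mr-1)) := by
          congr 1
          apply Finset.sum_congr rfl
          intro y _
          have hXprod : ∀ X : Str m, umass m X * kerDy m y X Z
              = ∏ i, ((1/Mr) * (if X i = y then (if Z i = y then (0:ℝ) else 1/(Mr-1))
                  else (if Z i = X i then 1 else 0))) := by
            intro X
            rw [humass X, kerDy, ← Finset.prod_mul_distrib]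
          rw [Finset.sum_congr rfl fun X _ => hXprod X]
          rw [← Fintype.prod_sum
            (fun i x => (1/Mr) * (if x = y then (if Z i = y then (0:ℝ) else 1/(Mr-1))
              else (if Z i = x then 1 else 0)))]
          exact Finset.prod_congr rfl fun i _ => hq y (Z i)
  -- Step 2 : fibers of V
  set I : Finset (Fin (NN m)) := V.image Prod.fst with hI
  set T : Fin (NN m) → Finset (Fin m) :=
    (fun i => (V.filter fun q => q.1 = i).image Prod.snd) with hT
  set A : Fin (NN m) → Finset (Fin (MM m)) :=
    (fun i => univ.filter fun v => ∀ j ∈ T i, Nat.testBit v.val j.val = a (i, j)) with hA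
  have hTcard : ∀ i, (T i).card = (V.filter fun q => q.1 = i).card := by
    intro i
    apply Finset.card_image_of_injOn
    intro q hq q' hq' hqq
    simp only [mem_coe, mem_filter] at hq hq'
    exact Prod.ext (hq.2.trans hq'.2.symm) hqq
  have hTm : ∀ i, (T i).card ≤ m := by
    intro i
    simpa using Finset.card_le_card (Finset.subset_univ (T i))
  have hAcard : ∀ i, (A i).card = 2 ^ (m - (T i).card) := by
    intro i
    exact card_cyl m (T i) (fun j => a (i, j))
  have hsumk : ∑ i ∈ I, (V.filter fun q => q.1 = i).card = k := by
    rw [← hV]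
    exact (Finset.card_eq_sum_card_fiberwise (fun q hq => mem_image_of_mem Prod.fst hq)).symm
  have hrk : I.card ≤ k := hV ▸ Finset.card_image_le
  -- Step 3 : membership decomposition
  have hmem : ∀ Z : Str m, (∀ q ∈ V, bit Z q = a q) ↔ (∀ i, Z i ∈ A i) := by
    intro Z
    constructor
    · intro h i
      simp only [hA, mem_filter, mem_univ, true_and]
      intro j hj
      simp only [hT, mem_image, mem_filter] at hj
      obtain ⟨q, ⟨hqV, hq1⟩, hq2⟩ := hj
      have hq : q = (i, j) := Prod.ext hq1 hq2
      have hb := h q hqV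
      rw [hq] at hb
      simpa [bit] using hb
    · intro h q hqV
      have hi := h q.1
      simp only [hA, mem_filter, mem_univ, true_and] at hi
      have hj : q.2 ∈ T q.1 := by
        simp only [hT, mem_image, mem_filter]
        exact ⟨q, ⟨hqV, rfl⟩, rfl⟩
      have hb := hi q.2 hj
      simpa [bit] using hb
  -- Step 4 : pr formula
  have hpr : pr (dmass m) {X : Str m | ∀ q ∈ V, bit X q = a q}
      = (1/Mr) * ∑ y, ∏ i ∈ I,
          ((((A i).card : ℝ) - (if y ∈ A i then 1 else 0)) / (Mr - 1)) := by
    have hGi : ∀ (i : Fin (NN m)) (y : Fin (MM m)),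
        (∑ v : Fin (MM m), if v ∈ A i then (if v = y then (0:ℝ) else 1/(Mr-1)) else 0)
        = ((((A i).card : ℝ) - (if y ∈ A i then 1 else 0)) / (Mr - 1)) := by
      intro i y
      rw [Finset.sum_ite_mem, Finset.univ_inter]
      have hterm : ∀ v : Fin (MM m), (if v = y then (0:ℝ) else 1/(Mr-1))
          = 1/(Mr-1) - (if v = y then 1/(Mr-1) else 0) := by
        intro v; split <;> simp
      rw [Finset.sum_congr rfl fun v _ => hterm v, Finset.sum_sub_distrib,
        Finset.sum_const, Finset.sum_ite_eq' (A i) y (fun _ => (1:ℝ)/(Mr-1))]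
      by_cases hy : y ∈ A i
      · rw [if_pos hy, if_pos hy, nsmul_eq_mul]
        field_simp
      · rw [if_neg hy, if_neg hy, nsmul_eq_mul]
        field_simp
        ring
    have hprod_univ_I : ∀ y : Fin (MM m),
        (∏ i, ((((A i).card : ℝ) - (if y ∈ A i then 1 else 0)) / (Mr - 1)))
        = ∏ i ∈ I, ((((A i).card : ℝ) - (if y ∈ A i then 1 else 0)) / (Mr - 1)) := by
      intro y
      symm
      apply Finset.prod_subset (Finset.subset_univ I)
      intro i _ hiI
      have hfil : V.filter (fun q => q.1 = i) = ∅ := by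
        rw [Finset.filter_eq_empty_iff]
        intro q hq hq1
        exact hiI (hI ▸ (hq1 ▸ mem_image_of_mem Prod.fst hq))
      have hTi : T i = ∅ := by
        simp only [hT, hfil, Finset.image_empty]
      have hAi : A i = univ := by
        simp only [hA, hTi]
        simp
      rw [hAi]
      simp only [Finset.mem_univ, if_pos, Finset.card_univ, Fintype.card_fin]
      rw [← hMr]
      exact div_self (ne_of_gt hMm1)
    calc pr (dmass m) {X : Str m | ∀ q ∈ V, bit X q = a q}
        = ∑ Z : Str m, (if (∀ i, Z i ∈ A i) then dmass m Z else 0) := by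
          apply Finset.sum_congr rfl
          intro Z _
          rw [Set.indicator_apply]
          exact if_congr (by simpa [Set.mem_setOf_eq] using hmem Z) rfl rfl
      _ = ∑ Z : Str m, (1/Mr) * (if (∀ i, Z i ∈ A i)
            then (∑ y, ∏ i, (if Z i = y then (0:ℝ) else 1/(Mr-1))) else 0) := by
          apply Finset.sum_congr rfl
          intro Z _
          rw [hdmass Z]
          split <;> simp
      _ = (1/Mr) * ∑ y, ∑ Z : Str m,
            ∏ i, (if Z i ∈ A i then (if Z i = y then (0:ℝ) else 1/(Mr-1)) else 0) := by
          rw [← Finset.mul_sum]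
          congr 1
          have h1 : ∀ Z : Str m, (if (∀ i, Z i ∈ A i)
              then (∑ y, ∏ i, (if Z i = y then (0:ℝ) else 1/(Mr-1))) else 0)
              = ∑ y, ∏ i, (if Z i ∈ A i then (if Z i = y then (0:ℝ) else 1/(Mr-1)) else 0) := by
            intro Z
            by_cases hP : ∀ i, Z i ∈ A i
            · rw [if_pos hP]
              apply Finset.sum_congr rfl
              intro y _
              rw [prod_ite_all, if_pos hP]
            · rw [if_neg hP]
              symm
              apply Finset.sum_eq_zero
              intro y _
              rw [prod_ite_all, if_neg hP]
          rw [Finset.sum_congr rfl fun Z _ => h1 Z, Finset.sum_comm]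
      _ = (1/Mr) * ∑ y, ∏ i, (∑ v : Fin (MM m),
            (if v ∈ A i then (if v = y then (0:ℝ) else 1/(Mr-1)) else 0)) := by
          congr 1
          apply Finset.sum_congr rfl
          intro y _
          rw [Fintype.prod_sum
            (fun i v => if v ∈ A i then (if v = y then (0:ℝ) else 1/(Mr-1)) else 0)]
      _ = (1/Mr) * ∑ y, ∏ i, ((((A i).card : ℝ) - (if y ∈ A i then 1 else 0)) / (Mr - 1)) := by
          congr 1
          apply Finset.sum_congr rfl
          intro y _
          exact Finset.prod_congr rfl fun i _ => hGi i y
      _ = (1/Mr) * ∑ y, ∏ i ∈ I,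
            ((((A i).card : ℝ) - (if y ∈ A i then 1 else 0)) / (Mr - 1)) := by
          congr 1
          exact Finset.sum_congr rfl fun y _ => hprod_univ_I y
  -- Step 5 : bounds
  have hMr2 : Mr = (2:ℝ)^m := by rw [hMr, MM]; push_cast; ring
  have hc1 : ∀ i, (1:ℝ) ≤ ((A i).card : ℝ) := by
    intro i
    rw [hAcard i]
    exact_mod_cast Nat.one_le_two_pow
  have hc0 : ∀ i, (0:ℝ) < ((A i).card : ℝ) := fun i => lt_of_lt_of_le one_pos (hc1 i)
  have hchi0 : ∀ (i : Fin (NN m)) (y : Fin (MM m)),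
      (0:ℝ) ≤ (if y ∈ A i then (1:ℝ) else 0) := by intro i y; split <;> norm_num
  have hchi1 : ∀ (i : Fin (NN m)) (y : Fin (MM m)),
      (if y ∈ A i then (1:ℝ) else 0) ≤ 1 := by intro i y; split <;> norm_num
  have hGnn : ∀ (i : Fin (NN m)) (y : Fin (MM m)),
      (0:ℝ) ≤ (((A i).card : ℝ) - (if y ∈ A i then 1 else 0)) / (Mr - 1) := by
    intro i y
    apply div_nonneg _ (le_of_lt hMm1)
    have := hchi1 i y
    have := hc1 i
    linarith
  have hGle : ∀ (i : Fin (NN m)) (y : Fin (MM m)),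
      (((A i).card : ℝ) - (if y ∈ A i then 1 else 0)) / (Mr - 1)
        ≤ ((A i).card : ℝ) / (Mr - 1) := by
    intro i y
    apply (div_le_div_iff_of_pos_right hMm1).mpr
    linarith [hchi0 i y]
  have hPval : ∏ i ∈ I, (((A i).card : ℝ)/(Mr-1)) = (Mr/(Mr-1))^I.card / 2^k := by
    have hc : ∀ i ∈ I, ((A i).card : ℝ) = Mr * ((2:ℝ)^((T i).card))⁻¹ := by
      intro i _
      rw [hAcard i]
      push_cast
      rw [hMr2, ← pow_sub₀ (2:ℝ) two_ne_zero (hTm i)]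
    calc ∏ i ∈ I, (((A i).card : ℝ)/(Mr-1))
        = ∏ i ∈ I, (Mr/(Mr-1) * ((2:ℝ)^((T i).card))⁻¹) := by
          apply Finset.prod_congr rfl
          intro i hi
          rw [hc i hi]
          ring
      _ = (Mr/(Mr-1))^I.card * (∏ i ∈ I, (2:ℝ)^((T i).card))⁻¹ := by
          rw [Finset.prod_mul_distrib, Finset.prod_const, ← Finset.prod_inv_distrib]
      _ = (Mr/(Mr-1))^I.card / 2^k := by
          rw [Finset.prod_pow_eq_pow_sum]
          have : ∑ i ∈ I, (T i).card = k := by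
            rw [Finset.sum_congr rfl fun i _ => hTcard i]
            exact hsumk
          rw [this]
          ring
  have hratio1 : (1:ℝ) ≤ Mr/(Mr-1) := by
    rw [le_div_iff₀ hMm1]; linarith
  have hratio0 : (0:ℝ) ≤ Mr/(Mr-1) := by linarith
  have hchisum : ∀ i : Fin (NN m),
      (∑ y : Fin (MM m), (if y ∈ A i then (1:ℝ) else 0)) = ((A i).card : ℝ) := by
    intro i
    rw [Finset.sum_boole]
    congr 1
    rw [Finset.filter_mem_eq_inter, Finset.univ_inter]
  have hcardy : (∑ _y : Fin (MM m), (1:ℝ)) = Mr := by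
    rw [Finset.sum_const, Finset.card_univ, Fintype.card_fin, nsmul_eq_mul, mul_one, hMr]
  have h2k : 2 * (k:ℝ) ≤ Mr := by
    rw [hMr]
    exact_mod_cast hk
  have hrkR : (I.card : ℝ) ≤ 2 * (k:ℝ) := by
    have : (I.card : ℝ) ≤ (k:ℝ) := by exact_mod_cast hrk
    linarith [Nat.cast_nonneg (α := ℝ) k]
  -- upper bound on pr
  have hub : pr (dmass m) {X : Str m | ∀ q ∈ V, bit X q = a q}
      ≤ (Mr/(Mr-1))^I.card / 2^k := by
    rw [hpr]
    have hsum : ∑ y : Fin (MM m), ∏ i ∈ I,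
        ((((A i).card : ℝ) - (if y ∈ A i then 1 else 0)) / (Mr - 1))
        ≤ ∑ _y : Fin (MM m), ∏ i ∈ I, (((A i).card : ℝ)/(Mr-1)) := by
      apply Finset.sum_le_sum
      intro y _
      apply Finset.prod_le_prod (fun i _ => hGnn i y) (fun i _ => hGle i y)
    calc (1/Mr) * ∑ y : Fin (MM m), ∏ i ∈ I,
          ((((A i).card : ℝ) - (if y ∈ A i then 1 else 0)) / (Mr - 1))
        ≤ (1/Mr) * ∑ _y : Fin (MM m), ∏ i ∈ I, (((A i).card : ℝ)/(Mr-1)) := by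
          apply mul_le_mul_of_nonneg_left hsum (by positivity)
      _ = ∏ i ∈ I, (((A i).card : ℝ)/(Mr-1)) := by
          rw [Finset.sum_const, Finset.card_univ, Fintype.card_fin, nsmul_eq_mul, ← hMr]
          rw [← mul_assoc, one_div_mul_cancel (ne_of_gt hM0), one_mul]
      _ = (Mr/(Mr-1))^I.card / 2^k := hPval
  -- lower bound on pr
  have hlb : (1 - 2*(k:ℝ)/Mr) / 2^k ≤ pr (dmass m) {X : Str m | ∀ q ∈ V, bit X q = a q} := by
    rw [hpr]
    have hyb : ∀ y : Fin (MM m),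
        (∏ i ∈ I, (((A i).card : ℝ)/(Mr-1)))
          * (1 - ∑ i ∈ I, (if y ∈ A i then (1:ℝ) else 0) / ((A i).card : ℝ))
        ≤ ∏ i ∈ I, ((((A i).card : ℝ) - (if y ∈ A i then 1 else 0)) / (Mr - 1)) := by
      intro y
      have hfac : ∀ i ∈ I, ((((A i).card : ℝ) - (if y ∈ A i then 1 else 0)) / (Mr - 1))
          = (((A i).card : ℝ)/(Mr-1))
            * (1 - (if y ∈ A i then (1:ℝ) else 0) / ((A i).card : ℝ)) := by
        intro i _
        have hne : ((A i).card : ℝ) ≠ 0 := ne_of_gt (hc0 i)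
        field_simp
      rw [Finset.prod_congr rfl hfac, Finset.prod_mul_distrib]
      apply mul_le_mul_of_nonneg_left
      · apply prod_one_sub_ge
        · intro i _
          exact div_nonneg (hchi0 i y) (le_of_lt (hc0 i))
        · intro i _
          rw [div_le_one (hc0 i)]
          exact le_trans (hchi1 i y) (hc1 i)
      · exact Finset.prod_nonneg fun i _ => div_nonneg (le_of_lt (hc0 i)) (le_of_lt hMm1)
    have hsumyb : (∏ i ∈ I, (((A i).card : ℝ)/(Mr-1))) * (Mr - I.card)
        ≤ ∑ y : Fin (MM m), ∏ i ∈ I,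
            ((((A i).card : ℝ) - (if y ∈ A i then 1 else 0)) / (Mr - 1)) := by
      have : ∑ y : Fin (MM m),
          (∏ i ∈ I, (((A i).card : ℝ)/(Mr-1)))
            * (1 - ∑ i ∈ I, (if y ∈ A i then (1:ℝ) else 0) / ((A i).card : ℝ))
          = (∏ i ∈ I, (((A i).card : ℝ)/(Mr-1))) * (Mr - I.card) := by
        rw [← Finset.mul_sum]
        congr 1
        rw [Finset.sum_sub_distrib, hcardy]
        congr 1
        rw [Finset.sum_comm]
        have : ∀ i ∈ I, (∑ y : Fin (MM m),
            (if y ∈ A i then (1:ℝ) else 0) / ((A i).card : ℝ)) = 1 := by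
          intro i _
          rw [← Finset.sum_div, hchisum i, div_self (ne_of_gt (hc0 i))]
        rw [Finset.sum_congr rfl this, Finset.sum_const, nsmul_eq_mul, mul_one]
      rw [← this]
      exact Finset.sum_le_sum fun y _ => hyb y
    have hP1 : (1:ℝ)/2^k ≤ ∏ i ∈ I, (((A i).card : ℝ)/(Mr-1)) := by
      rw [hPval]
      apply (div_le_div_iff_of_pos_right (by positivity : (0:ℝ) < 2^k)).mpr
      exact one_le_pow₀ hratio1
    have hMr2k : (0:ℝ) ≤ Mr - 2*(k:ℝ) := by linarith
    calc (1 - 2*(k:ℝ)/Mr) / 2^k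
        = (1/Mr) * ((1/2^k) * (Mr - 2*(k:ℝ))) := by
          field_simp
      _ ≤ (1/Mr) * ((∏ i ∈ I, (((A i).card : ℝ)/(Mr-1))) * (Mr - I.card)) := by
          apply mul_le_mul_of_nonneg_left _ (by positivity)
          apply mul_le_mul hP1 (by linarith) hMr2k
          exact Finset.prod_nonneg fun i _ => div_nonneg (le_of_lt (hc0 i)) (le_of_lt hMm1)
      _ ≤ (1/Mr) * ∑ y : Fin (MM m), ∏ i ∈ I,
            ((((A i).card : ℝ) - (if y ∈ A i then 1 else 0)) / (Mr - 1)) := by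
          apply mul_le_mul_of_nonneg_left hsumyb (by positivity)
  -- conclude
  have hpow : ((2:ℝ)⁻¹) ^ k = 1 / 2^k := by
    rw [inv_pow, one_div]
  have hpowpos : (0:ℝ) < ((2:ℝ)⁻¹) ^ k := by positivity
  have hup : (Mr/(Mr-1))^I.card / 2^k ≤ (1 + 2*(k:ℝ)/Mr) / 2^k := by
    apply (div_le_div_iff_of_pos_right (by positivity : (0:ℝ) < 2^k)).mpr
    have hrp := ratio_pow_le (MM m) hMnat k hk
    rw [← hMr] at hrp
    calc (Mr/(Mr-1))^I.card ≤ (Mr/(Mr-1))^k := pow_le_pow_right₀ hratio1 hrk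
      _ ≤ 1 + 2*(k:ℝ)/Mr := hrp
  constructor
  · rw [le_div_iff₀ hpowpos, hpow]
    calc (1 - 2*(k:ℝ)/Mr) * (1/2^k) = (1 - 2*(k:ℝ)/Mr) / 2^k := by ring
      _ ≤ _ := hlb
  · rw [div_le_iff₀ hpowpos, hpow]
    calc pr (dmass m) {X : Str m | ∀ q ∈ V, bit X q = a q}
        ≤ (Mr/(Mr-1))^I.card / 2^k := hub
      _ ≤ (1 + 2*(k:ℝ)/Mr) / 2^k := hup
      _ = (1 + 2*(k:ℝ)/Mr) * (1/2^k) := by ring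


end
end GLN
end

section
/- Let X ∈ [M]^N satisfy |Im(X)| = M − 1 (so f_Surj(X) = 0), and let A(X) := {i ∈ [N] : ∃ j ≠ i with x_j = x_i}. Then |A(X)| ≥ N − M, and for every i ∈ A(X), changing only the coordinate x_i to the unique element of [M]∖Im(X) yields a string X^i with f_Surj(X^i) = 1. Hence the block-sensitivity satisfies bs_X(f_Surj) ≥ N − M (witnessed by the pairwise disjoint singleton blocks {i}, i ∈ A(X)). -/
namespace GLN

noncomputable section

open Finset

/-- The block-sensitivity of `f` at `X`: the largest `t` for which there exist pairwise
disjoint blocks `B_1,…,B_t ⊆ [N]` and strings `X^{(1)},…,X^{(t)}`, with `X^{(j)}` agreeing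
with `X` outside `B_j`, such that `f(X^{(j)}) ≠ f(X)` for every `j`. -/
def bs {m : ℕ} (f : Str m → Bool) (X : Str m) : ℕ :=
  sSup {t : ℕ | ∃ B : Fin t → Finset (Fin (NN m)),
    (∀ j j', j ≠ j' → Disjoint (B j) (B j')) ∧
    ∃ X' : Fin t → Str m, ∀ j, (∀ i, i ∉ B j → X' j i = X i) ∧ f (X' j) ≠ f X}

/-- if `|Im(X)| = M − 1` and `A(X) = {i : ∃ j ≠ i, x_j = x_i}`, then
`|A(X)| ≥ N − M`; changing any single coordinate `x_i` with `i ∈ A(X)` to the missing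
value yields a surjective string; hence `bs_X(f_Surj) ≥ N − M`. -/
theorem stmt13 (m : ℕ) (hm : 1 ≤ m) (X : Str m) (hX : (img X).card = MM m - 1)
    (A : Finset (Fin (NN m)))
    (hA : A = Finset.univ.filter fun i => ∃ j, j ≠ i ∧ X j = X i) :
    NN m - MM m ≤ A.card ∧
    (∀ i ∈ A, ∀ y : Fin (MM m), y ∉ img X →
      fSurjB m (Function.update X i y) = true) ∧
    NN m - MM m ≤ bs (fSurjB m) X := by
  classical
  have hM1 : 1 ≤ MM m := Nat.one_le_two_pow
  have hcardM : Fintype.card (Fin (MM m)) = MM m := Fintype.card_fin _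
  have himgne : img X ≠ Finset.univ := by
    intro h
    have := hX
    rw [h, Finset.card_univ, hcardM] at this
    omega
  have hfX : fSurjB m X = false := by simp [fSurjB, himgne]
  obtain ⟨y₀, hy₀⟩ : ∃ y, y ∉ img X := by
    by_contra h
    push_neg at h
    exact himgne (Finset.eq_univ_of_forall h)
  -- part 2
  have part2 : ∀ i ∈ A, ∀ y : Fin (MM m), y ∉ img X →
      fSurjB m (Function.update X i y) = true := by
    intro i hi y hy
    rw [hA, Finset.mem_filter] at hi
    obtain ⟨-, j, hji, hXj⟩ := hi
    have h1 : img (Function.update X i y) = insert y (img X) := by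
      ext z
      simp only [img, Finset.mem_image, Finset.mem_univ, true_and, Finset.mem_insert]
      constructor
      · rintro ⟨k, rfl⟩
        by_cases hk : k = i
        · subst hk; left; simp
        · right; exact ⟨k, by simp [Function.update_of_ne hk]⟩
      · rintro (rfl | ⟨k, rfl⟩)
        · exact ⟨i, by simp⟩
        · by_cases hk : k = i
          · refine ⟨j, ?_⟩
            subst hk
            rw [Function.update_of_ne hji, hXj]
          · exact ⟨k, by simp [Function.update_of_ne hk]⟩
    have h2 : img (Function.update X i y) = Finset.univ := by
      apply Finset.eq_univ_of_card
      rw [h1, Finset.card_insert_of_notMem hy, hX, hcardM]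
      omega
    simp [fSurjB, h2]
  -- part 1
  have part1 : NN m - MM m ≤ A.card := by
    have hinj : Set.InjOn X ↑Aᶜ := by
      intro a ha b hb hab
      by_contra hne
      have haA : a ∈ A := by
        rw [hA, Finset.mem_filter]
        exact ⟨Finset.mem_univ _, b, fun h => hne h.symm, hab.symm⟩
      simp only [Finset.coe_compl, Set.mem_compl_iff, Finset.mem_coe] at ha
      exact ha haA
    have hle : Aᶜ.card ≤ (img X).card :=
      Finset.card_le_card_of_injOn X (fun a _ => by
        simp [img]) hinj
    have hsum : A.card + Aᶜ.card = NN m := by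
      rw [Finset.card_add_card_compl, Fintype.card_fin]
    rw [hX] at hle
    omega
  refine ⟨part1, part2, ?_⟩
  -- part 3
  set t := NN m - MM m with ht
  obtain ⟨A', hA'sub, hA'card⟩ := Finset.exists_subset_card_eq (s := A) (n := t) part1
  let e : Fin t → Fin (NN m) := fun j => (A'.equivFin.symm (Fin.cast hA'card.symm j) : Fin (NN m))
  have heA : ∀ j, e j ∈ A := fun j => hA'sub (A'.equivFin.symm _).2
  have heinj : Function.Injective e := by
    intro j j' h
    have := Subtype.ext h
    have h2 := A'.equivFin.symm.injective this
    exact Fin.cast_injective hA'card.symm h2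
  have hmem : t ∈ {t : ℕ | ∃ B : Fin t → Finset (Fin (NN m)),
      (∀ j j', j ≠ j' → Disjoint (B j) (B j')) ∧
      ∃ X' : Fin t → Str m, ∀ j, (∀ i, i ∉ B j → X' j i = X i) ∧
        fSurjB m (X' j) ≠ fSurjB m X} := by
    refine ⟨fun j => {e j}, ?_, fun j => Function.update X (e j) y₀, ?_⟩
    · intro j j' hjj'
      simp only [Finset.disjoint_singleton]
      exact fun h => hjj' (heinj h)
    · intro j
      refine ⟨fun i hi => ?_, ?_⟩
      · exact Function.update_of_ne (by simpa using hi) _ _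
      · rw [part2 (e j) (heA j) y₀ hy₀, hfX]
        simp
  have hbdd : BddAbove {t : ℕ | ∃ B : Fin t → Finset (Fin (NN m)),
      (∀ j j', j ≠ j' → Disjoint (B j) (B j')) ∧
      ∃ X' : Fin t → Str m, ∀ j, (∀ i, i ∉ B j → X' j i = X i) ∧
        fSurjB m (X' j) ≠ fSurjB m X} := by
    refine ⟨NN m, ?_⟩
    rintro s ⟨B, hdisj, X', hX'⟩
    have hne : ∀ j, (B j).Nonempty := by
      intro j
      rcases Finset.eq_empty_or_nonempty (B j) with h | h
      · exfalso
        apply (hX' j).2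
        congr 1
        funext i
        exact (hX' j).1 i (by simp [h])
      · exact h
    choose c hc using hne
    have hcinj : Function.Injective c := by
      intro j j' h
      by_contra hne'
      exact (Finset.disjoint_left.mp (hdisj j j' hne') (hc j)) (h ▸ hc j')
    calc s = Fintype.card (Fin s) := (Fintype.card_fin s).symm
      _ ≤ Fintype.card (Fin (NN m)) := Fintype.card_le_of_injective c hcinj
      _ = NN m := Fintype.card_fin _
  exact le_csSup hbdd hmem

end
end GLN
end
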